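/- Let z be real with 0 ≤ z < 1, let k̃ = ((k_1,μ_1),…,(k_r,μ_r)) be an augmented index and let l̃ = ((l_1,ν_1),…,(l_s,ν_s)) be a non-empty augmented index (s ≥ 1). Then the connected sum satisfies the transport relation L̃i(w(k̃)y_1; w(l̃); z) = L̃i(w(k̃); w(l̃)x; z), i.e. appending the augmented entry (1,1) to the first index gives the same value as increasing the last exponent l_s of the second index by 1. -/

import Mathlib

open scoped ENNReal

/-- The rising factorial (Pochhammer symbol) (a)_n = a(a+1)⋯(a+n−1). -/
noncomputable def risingFactorial (a : ℝ) (n : ℕ) : ℝ := ∏ i ∈ Finset.range n, (a + i)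

/-- The Gauss hypergeometric series F(α,β;γ;z) = ∑_{n≥0} (α)_n (β)_n / ((γ)_n n!) · zⁿ. -/
noncomputable def F (α β γ z : ℝ) : ℝ :=
  ∑' n : ℕ, risingFactorial α n * risingFactorial β n /
    (risingFactorial γ n * (n.factorial : ℝ)) * z ^ n

/-- The connector C(m,n;z) = m! n!/(m+n)! · F(m, n; m+n+1; z). -/
noncomputable def C (m n : ℕ) (z : ℝ) : ℝ :=
  (m.factorial : ℝ) * n.factorial / (m + n).factorial * F m n (m + n + 1) z

/-- An augmented index: a tuple of pairs (k_i, μ_i) with μ_i ∈ {0,1};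
`true` encodes μ = 1 and `false` encodes μ = 0. -/
abbrev AugIndex := List (ℕ × Bool)

/-- All exponents k_i of the augmented index are positive integers. -/
def AugIndex.Valid (K : AugIndex) : Prop := ∀ p ∈ K, 1 ≤ p.1

/-- An augmented index is admissible if it is empty or its last entry is not (1,1). -/
def AugIndex.Admissible (K : AugIndex) : Prop := K.getLast? ≠ some (1, true)

/-- The strictly increasing chain 0 = m_0 < m_1 < ⋯ < m_r encoded by gaps `d`:
m_i = (d_0 + 1) + ⋯ + (d_{i-1} + 1). -/
def chain {r : ℕ} (d : Fin r → ℕ) (i : ℕ) : ℕ :=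
  ∑ j ∈ Finset.univ.filter (fun j : Fin r => (j : ℕ) < i), (d j + 1)

/-- The factor (μ_i + (−1)^{μ_i} z^{m_i − m_{i−1}}) / m_i^{k_i}. -/
noncomputable def termFactor (z : ℝ) (k : ℕ) (μ : Bool) (mprev mcur : ℕ) : ℝ :=
  ((if μ then 1 else 0) + (if μ then -1 else 1) * z ^ (mcur - mprev)) / (mcur : ℝ) ^ k

/-- The connected sum L̃i(k̃; l̃; z), a well-defined sum of nonnegative terms in [0,∞]. -/
noncomputable def connSum (K L : AugIndex) (z : ℝ) : ℝ≥0∞ :=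
  ∑' p : (Fin K.length → ℕ) × (Fin L.length → ℕ),
    ENNReal.ofReal
      ((∏ i : Fin K.length,
          termFactor z (K.get i).1 (K.get i).2 (chain p.1 i.val) (chain p.1 (i.val + 1))) *
       (∏ j : Fin L.length,
          termFactor z (L.get j).1 (L.get j).2 (chain p.2 j.val) (chain p.2 (j.val + 1))) *
       C (chain p.1 K.length) (chain p.2 L.length) z)

/-- Appending the letter x to the word w(k̃): increase the last exponent k_r by 1. -/
def incLast : AugIndex → AugIndex
  | [] => []
  | [p] => [(p.1 + 1, p.2)]
  | p :: q :: ps => p :: incLast (q :: ps)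

section Analytic

lemma rf_succ (a : ℝ) (k : ℕ) : risingFactorial a (k+1) = risingFactorial a k * (a + k) :=
  Finset.prod_range_succ _ _

lemma rf_nonneg {a : ℝ} (ha : 0 ≤ a) (k : ℕ) : 0 ≤ risingFactorial a k :=
  Finset.prod_nonneg fun i _ => by positivity

lemma rf_fact (m k : ℕ) :
    (m.factorial : ℝ) * risingFactorial ((m:ℝ)+1) k = ((m+k).factorial : ℝ) := by
  induction k with
  | zero => simp [risingFactorial]
  | succ k ih =>
      rw [rf_succ, ← mul_assoc, ih, show m + (k+1) = (m+k) + 1 by ring, Nat.factorial_succ]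
      push_cast; ring

lemma rf_eq (m k : ℕ) :
    risingFactorial ((m:ℝ)+1) k = ((m+k).factorial : ℝ) / (m.factorial : ℝ) := by
  rw [eq_div_iff (by exact_mod_cast (Nat.factorial_ne_zero m))]
  rw [mul_comm]; exact rf_fact m k

/-- the coefficient of z^k in C (μ+1) (ν+1) z -/
noncomputable def coef (μ ν k : ℕ) : ℝ :=
  (((μ+1) * (ν+1) * (μ+k).factorial * (ν+k).factorial : ℕ) : ℝ) /
    (((μ+ν+k+2).factorial * k.factorial : ℕ) : ℝ)

lemma coef_nonneg (μ ν k : ℕ) : 0 ≤ coef μ ν k := by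
  unfold coef; positivity

lemma C_succ_eq_tsum (μ ν : ℕ) (z : ℝ) :
    C (μ+1) (ν+1) z = ∑' k : ℕ, coef μ ν k * z ^ k := by
  rw [C, F, ← tsum_mul_left]
  congr 1; funext k
  have h3 : ((μ+1:ℕ):ℝ) + ((ν+1:ℕ):ℝ) + 1 = ((μ+ν+2:ℕ):ℝ) + 1 := by push_cast; ring
  have e1 : risingFactorial ((μ+1:ℕ):ℝ) k = ((μ+k).factorial : ℝ) / (μ.factorial : ℝ) := by
    rw [show ((μ+1:ℕ):ℝ) = (μ:ℝ)+1 by push_cast; ring]; exact rf_eq μ k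
  have e2 : risingFactorial ((ν+1:ℕ):ℝ) k = ((ν+k).factorial : ℝ) / (ν.factorial : ℝ) := by
    rw [show ((ν+1:ℕ):ℝ) = (ν:ℝ)+1 by push_cast; ring]; exact rf_eq ν k
  have e3 : risingFactorial (((μ+1:ℕ):ℝ) + ((ν+1:ℕ):ℝ) + 1) k
      = ((μ+ν+2+k).factorial : ℝ) / ((μ+ν+2).factorial : ℝ) := by
    rw [h3, show ((μ+ν+2:ℕ):ℝ) = ((μ+ν+2:ℕ):ℝ) from rfl]
    exact rf_eq (μ+ν+2) k
  rw [e1, e2, e3, coef]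
  rw [show (μ+1:ℕ) + (ν+1:ℕ) = μ+ν+2 by ring, show μ+ν+2+k = μ+ν+k+2 by ring]
  have n1 : (μ.factorial : ℝ) ≠ 0 := by exact_mod_cast Nat.factorial_ne_zero μ
  have n2 : (ν.factorial : ℝ) ≠ 0 := by exact_mod_cast Nat.factorial_ne_zero ν
  have n3 : ((μ+ν+2).factorial : ℝ) ≠ 0 := by exact_mod_cast Nat.factorial_ne_zero _
  have n4 : ((μ+ν+k+2).factorial : ℝ) ≠ 0 := by exact_mod_cast Nat.factorial_ne_zero _
  have n5 : (k.factorial : ℝ) ≠ 0 := by exact_mod_cast Nat.factorial_ne_zero k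
  have n6 : (((μ+1).factorial : ℕ) : ℝ) = (μ+1) * μ.factorial := by
    rw [Nat.factorial_succ]; push_cast; ring
  have n7 : (((ν+1).factorial : ℕ) : ℝ) = (ν+1) * ν.factorial := by
    rw [Nat.factorial_succ]; push_cast; ring
  rw [n6, n7]
  push_cast
  field_simp

lemma C_zero_left (n : ℕ) (z : ℝ) : C 0 n z = 1 := by
  have hF : F 0 (n:ℝ) ((0:ℝ) + n + 1) z = 1 := by
    rw [F]
    rw [tsum_eq_single 0 ?_]
    · simp [risingFactorial]
    · intro k hk
      have h0 : risingFactorial (0:ℝ) k = 0 := by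
        apply Finset.prod_eq_zero (i := 0)
        · simpa using Nat.pos_of_ne_zero hk
        · simp
      rw [h0]; simp
  rw [C]
  push_cast
  rw [hF]
  have hne : ((n.factorial : ℕ) : ℝ) ≠ 0 := Nat.cast_ne_zero.mpr (Nat.factorial_ne_zero n)
  rw [mul_one]
  simp [Nat.factorial_zero, div_self hne]

lemma F_nonneg {α β γ z : ℝ} (hα : 0 ≤ α) (hβ : 0 ≤ β) (hγ : 0 ≤ γ) (hz : 0 ≤ z) :
    0 ≤ F α β γ z := by
  apply tsum_nonneg
  intro k
  have := rf_nonneg hα k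
  have := rf_nonneg hβ k
  have := rf_nonneg hγ k
  positivity

lemma C_nonneg (m n : ℕ) {z : ℝ} (hz : 0 ≤ z) : 0 ≤ C m n z := by
  rw [C]
  have h := F_nonneg (α := (m:ℝ)) (β := (n:ℝ)) (γ := (m:ℝ)+(n:ℝ)+1)
    (by positivity) (by positivity) (by positivity) hz
  have : ((m:ℝ) + (n:ℝ) + 1) = ((m:ℕ):ℝ) + ((n:ℕ):ℝ) + 1 := by norm_num
  positivity

end Analytic

section PartB

variable {z : ℝ}

lemma fact_le_pow (ν k : ℕ) :
    (ν+k).factorial ≤ k.factorial * ((ν+1)*(k+1))^ν := by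
  induction ν with
  | zero => simpa using le_refl k.factorial
  | succ ν ih =>
      rw [show ν+1+k = (ν+k)+1 by ring, Nat.factorial_succ]
      calc (ν+k+1) * (ν+k).factorial
          ≤ (ν+k+1) * (k.factorial * ((ν+1)*(k+1))^ν) := Nat.mul_le_mul_left _ ih
        _ ≤ ((ν+1+1)*(k+1)) * (k.factorial * ((ν+1+1)*(k+1))^ν) := by
            apply Nat.mul_le_mul
            · nlinarith
            · exact Nat.mul_le_mul_left _ (Nat.pow_le_pow_left (by nlinarith) ν)
        _ = k.factorial * ((ν+1+1)*(k+1))^(ν+1) := by ring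

lemma coef_le (μ ν k : ℕ) :
    coef μ ν k ≤ (((μ+1) * ((ν+1) * ((ν+1)*(k+1))^ν) : ℕ) : ℝ) := by
  rw [coef, div_le_iff₀ (by positivity)]
  have hnat : (μ+1) * (ν+1) * (μ+k).factorial * (ν+k).factorial
      ≤ ((μ+1) * ((ν+1) * ((ν+1)*(k+1))^ν)) * ((μ+ν+k+2).factorial * k.factorial) := by
    calc (μ+1) * (ν+1) * (μ+k).factorial * (ν+k).factorial
        ≤ (μ+1) * (ν+1) * (μ+ν+k+2).factorial * (k.factorial * ((ν+1)*(k+1))^ν) := by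
          apply Nat.mul_le_mul
          · exact Nat.mul_le_mul_left _ (Nat.factorial_le (by omega))
          · exact fact_le_pow ν k
      _ = ((μ+1) * ((ν+1) * ((ν+1)*(k+1))^ν)) * ((μ+ν+k+2).factorial * k.factorial) := by
          ring
  exact_mod_cast hnat

lemma S_poly (hz0 : 0 ≤ z) (hz1 : z < 1) (ν : ℕ) :
    Summable (fun k : ℕ => (((k+1 : ℕ)) : ℝ)^ν * z^k) := by
  rcases eq_or_lt_of_le hz0 with h0 | h0
  · apply summable_of_ne_finset_zero (s := {0})
    intro k hk
    simp only [Finset.mem_singleton] at hk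
    rw [← h0, zero_pow hk, mul_zero]
  · have hz : ‖z‖ < 1 := by rwa [Real.norm_eq_abs, abs_of_nonneg hz0]
    have h := summable_pow_mul_geometric_of_norm_lt_one (R := ℝ) ν hz
    have h2 := (summable_nat_add_iff 1).mpr h
    have h3 := h2.mul_left (1/z)
    refine h3.congr fun k => ?_
    have hzne : z ≠ 0 := ne_of_gt h0
    rw [pow_succ]
    push_cast
    field_simp

lemma S_coefz (hz0 : 0 ≤ z) (hz1 : z < 1) (μ ν : ℕ) :
    Summable (fun k : ℕ => coef μ ν k * z^k) := by
  have hf : Summable (fun k : ℕ => (((μ+1) * ((ν+1) * ((ν+1)*(k+1))^ν) : ℕ) : ℝ) * z^k) := by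
    have h := (S_poly hz0 hz1 ν).mul_left (((μ+1)*((ν+1)*(ν+1)^ν) : ℕ) : ℝ)
    refine h.congr fun k => ?_
    rw [mul_pow]
    push_cast
    ring
  exact Summable.of_nonneg_of_le
    (fun k => mul_nonneg (coef_nonneg _ _ _) (pow_nonneg hz0 k))
    (fun k => mul_le_mul_of_nonneg_right (coef_le _ _ _) (pow_nonneg hz0 k)) hf

noncomputable def uu (m ν k d : ℕ) : ℝ :=
  ((m+d+k).factorial : ℝ) / ((m+d+k+ν+1).factorial : ℝ)

lemma uu_nonneg (m ν k d : ℕ) : 0 ≤ uu m ν k d := by rw [uu]; positivity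

lemma tel_eq (m ν k d : ℕ) :
    coef (m+d) ν k / ((m:ℝ)+d+1)
      = (((ν+k).factorial : ℝ)/(k.factorial : ℝ)) * (uu m ν k d - uu m ν k (d+1)) := by
  rw [coef, uu, uu,
    show m+d+ν+k+2 = (m+d+k)+ν+2 by ring,
    show m+(d+1)+k = (m+d+k)+1 by ring,
    show (m+d+k)+1+ν+1 = (m+d+k)+ν+2 by ring]
  have e1 : (((m+d+k)+ν+2).factorial : ℝ) = ((m:ℝ)+d+k+ν+2) * ((m+d+k)+ν+1).factorial := by
    rw [show (m+d+k)+ν+2 = ((m+d+k)+ν+1)+1 by ring, Nat.factorial_succ]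
    push_cast; ring
  have e2 : (((m+d+k)+1).factorial : ℝ) = ((m:ℝ)+d+k+1) * (m+d+k).factorial := by
    rw [Nat.factorial_succ]; push_cast; ring
  have n1 : ((m+d+k).factorial : ℝ) ≠ 0 := Nat.cast_ne_zero.mpr (Nat.factorial_ne_zero _)
  have n2 : (((m+d+k)+ν+1).factorial : ℝ) ≠ 0 := Nat.cast_ne_zero.mpr (Nat.factorial_ne_zero _)
  have n3 : ((k.factorial : ℕ) : ℝ) ≠ 0 := Nat.cast_ne_zero.mpr (Nat.factorial_ne_zero _)
  have n4 : (((ν+k).factorial : ℕ) : ℝ) ≠ 0 := Nat.cast_ne_zero.mpr (Nat.factorial_ne_zero _)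
  have n5 : ((m:ℝ)+d+1) ≠ 0 := by positivity
  have n6 : ((m:ℝ)+d+k+ν+2) ≠ 0 := by positivity
  push_cast [e1, e2]
  field_simp
  ring

lemma uu_le (m ν k d : ℕ) : uu m ν k d ≤ 1/((d:ℝ)+1) := by
  rw [uu, div_le_div_iff₀ (by positivity) (by positivity)]
  rw [one_mul]
  have hnat : (m+d+k).factorial * (d+1) ≤ (m+d+k+ν+1).factorial := by
    calc (m+d+k).factorial * (d+1)
        ≤ (m+d+k).factorial * (m+d+k+1) := Nat.mul_le_mul_left _ (by omega)
      _ = (m+d+k+1).factorial := by rw [Nat.factorial_succ]; ring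
      _ ≤ (m+d+k+ν+1).factorial := Nat.factorial_le (by omega)
  exact_mod_cast hnat

lemma uu_tendsto (m ν k : ℕ) :
    Filter.Tendsto (uu m ν k) Filter.atTop (nhds 0) :=
  squeeze_zero (uu_nonneg m ν k) (uu_le m ν k) tendsto_one_div_add_atTop_nhds_zero_nat

noncomputable def Ak (m ν k : ℕ) : ℝ :=
  (((m+k).factorial * (ν+k).factorial : ℕ) : ℝ) / (((m+k+ν+1).factorial * k.factorial : ℕ) : ℝ)

lemma hasSum_tel (m ν k : ℕ) :
    HasSum (fun d => coef (m+d) ν k / ((m:ℝ)+d+1)) (Ak m ν k) := by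
  have hnn : ∀ d : ℕ, 0 ≤ coef (m+d) ν k / ((m:ℝ)+d+1) :=
    fun d => div_nonneg (coef_nonneg _ _ _) (by positivity)
  rw [hasSum_iff_tendsto_nat_of_nonneg hnn]
  have hps : ∀ N : ℕ, ∑ d ∈ Finset.range N, coef (m+d) ν k / ((m:ℝ)+d+1)
      = (((ν+k).factorial : ℝ)/(k.factorial : ℝ)) * (uu m ν k 0 - uu m ν k N) := by
    intro N
    calc ∑ d ∈ Finset.range N, coef (m+d) ν k / ((m:ℝ)+d+1)
        = ∑ d ∈ Finset.range N,
            (((ν+k).factorial : ℝ)/(k.factorial : ℝ)) * (uu m ν k d - uu m ν k (d+1)) :=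
          Finset.sum_congr rfl (fun d _ => tel_eq m ν k d)
      _ = (((ν+k).factorial : ℝ)/(k.factorial : ℝ)) *
            ∑ d ∈ Finset.range N, (uu m ν k d - uu m ν k (d+1)) := by rw [Finset.mul_sum]
      _ = (((ν+k).factorial : ℝ)/(k.factorial : ℝ)) * (uu m ν k 0 - uu m ν k N) := by
          rw [Finset.sum_range_sub' (uu m ν k) N]
  have hlim : Filter.Tendsto
      (fun N => (((ν+k).factorial : ℝ)/(k.factorial : ℝ)) * (uu m ν k 0 - uu m ν k N))
      Filter.atTop (nhds ((((ν+k).factorial : ℝ)/(k.factorial : ℝ)) * (uu m ν k 0 - 0))) :=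
    (Filter.Tendsto.const_sub _ (uu_tendsto m ν k)).const_mul _
  have hval : (((ν+k).factorial : ℝ)/(k.factorial : ℝ)) * (uu m ν k 0 - 0) = Ak m ν k := by
    rw [sub_zero, uu, Ak]
    simp only [Nat.add_zero]
    push_cast
    ring
  rw [← hval]
  exact Filter.Tendsto.congr (fun N => (hps N).symm) hlim

lemma Ak_nonneg (m ν k : ℕ) : 0 ≤ Ak m ν k := by rw [Ak]; positivity

lemma Ak_le (m ν k : ℕ) : Ak m ν k ≤ ((((ν+1)*(k+1))^ν : ℕ) : ℝ) := by
  rw [Ak, div_le_iff₀ (by positivity)]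
  have hnat : (m+k).factorial * (ν+k).factorial
      ≤ ((ν+1)*(k+1))^ν * ((m+k+ν+1).factorial * k.factorial) := by
    calc (m+k).factorial * (ν+k).factorial
        ≤ (m+k+ν+1).factorial * (k.factorial * ((ν+1)*(k+1))^ν) :=
          Nat.mul_le_mul (Nat.factorial_le (by omega)) (fact_le_pow ν k)
      _ = ((ν+1)*(k+1))^ν * ((m+k+ν+1).factorial * k.factorial) := by ring
  exact_mod_cast hnat

lemma S_Az (hz0 : 0 ≤ z) (hz1 : z < 1) (m ν : ℕ) :
    Summable (fun k : ℕ => Ak m ν k * z^k) := by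
  have hf : Summable (fun k : ℕ => ((((ν+1)*(k+1))^ν : ℕ) : ℝ) * z^k) := by
    have h := (S_poly hz0 hz1 ν).mul_left ((((ν+1)^ν : ℕ)) : ℝ)
    refine h.congr fun k => ?_
    rw [mul_pow]
    push_cast
    ring
  exact Summable.of_nonneg_of_le
    (fun k => mul_nonneg (Ak_nonneg _ _ _) (pow_nonneg hz0 k))
    (fun k => mul_le_mul_of_nonneg_right (Ak_le _ _ _) (pow_nonneg hz0 k)) hf

end PartB

section PartB2

variable {z : ℝ}

noncomputable def Bc (m ν : ℕ) : ℕ → ℝ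
  | 0 => 0
  | (κ+1) => (((m+κ).factorial * (ν+κ+1).factorial : ℕ) : ℝ) /
      (((m+ν+κ+2).factorial * κ.factorial : ℕ) : ℝ)

lemma hock (ν : ℕ) : ∀ M : ℕ, ∑ i ∈ Finset.range M, (((ν+i).factorial : ℝ)/(i.factorial : ℝ))
    = M * ((ν+M).factorial : ℝ) / (((ν:ℝ)+1) * (M.factorial : ℝ)) := by
  intro M
  induction M with
  | zero => simp
  | succ M ih =>
      rw [Finset.sum_range_succ, ih,
        show ν+(M+1) = (ν+M)+1 by ring, Nat.factorial_succ ((ν+M)), Nat.factorial_succ M]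
      have n1 : ((M.factorial : ℕ) : ℝ) ≠ 0 := Nat.cast_ne_zero.mpr (Nat.factorial_ne_zero _)
      have n2 : ((ν:ℝ)+1) ≠ 0 := by positivity
      push_cast
      field_simp
      ring

lemma term_eq (m ν κ d : ℕ) (hd : d ≤ κ) :
    coef (m+d) ν (κ-d) / ((m:ℝ)+d+1)
      = (((ν:ℝ)+1) * ((m+κ).factorial : ℝ) / (((m+ν+κ+2).factorial : ℕ) : ℝ))
        * (((ν+(κ-d)).factorial : ℝ) / (((κ-d).factorial : ℕ) : ℝ)) := by
  rw [coef, show m+d+(κ-d) = m+κ by omega, show m+d+ν+(κ-d)+2 = m+ν+κ+2 by omega]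
  have n1 : (((m+ν+κ+2).factorial : ℕ) : ℝ) ≠ 0 := Nat.cast_ne_zero.mpr (Nat.factorial_ne_zero _)
  have n2 : (((κ-d).factorial : ℕ) : ℝ) ≠ 0 := Nat.cast_ne_zero.mpr (Nat.factorial_ne_zero _)
  have n5 : ((m:ℝ)+d+1) ≠ 0 := by positivity
  push_cast
  field_simp

lemma sum_diag_eq (m ν κ : ℕ) :
    ∑ d ∈ Finset.range (κ+1), coef (m+d) ν (κ-d) / ((m:ℝ)+d+1) = Bc m ν (κ+1) := by
  have h1 : ∑ d ∈ Finset.range (κ+1), coef (m+d) ν (κ-d) / ((m:ℝ)+d+1)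
      = ∑ d ∈ Finset.range (κ+1),
          (((ν:ℝ)+1) * ((m+κ).factorial : ℝ) / (((m+ν+κ+2).factorial : ℕ) : ℝ))
            * (((ν+(κ-d)).factorial : ℝ) / (((κ-d).factorial : ℕ) : ℝ)) :=
    Finset.sum_congr rfl (fun d hd => term_eq m ν κ d (by
      simp only [Finset.mem_range] at hd; omega))
  rw [h1, ← Finset.mul_sum]
  have h2 : ∑ d ∈ Finset.range (κ+1), (((ν+(κ-d)).factorial : ℝ) / (((κ-d).factorial : ℕ) : ℝ))
      = ∑ i ∈ Finset.range (κ+1), (((ν+i).factorial : ℝ) / ((i.factorial : ℕ) : ℝ)) := by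
    rw [← Finset.sum_range_reflect (fun i => (((ν+i).factorial : ℝ) / ((i.factorial : ℕ) : ℝ))) (κ+1)]
    exact Finset.sum_congr rfl (fun d hd => by
      simp only [Finset.mem_range] at hd
      rw [show κ+1-1-d = κ-d by omega])
  rw [h2, hock ν (κ+1), Bc]
  rw [show ν+(κ+1) = ν+κ+1 by ring, Nat.factorial_succ κ]
  have n1 : (((m+ν+κ+2).factorial : ℕ) : ℝ) ≠ 0 := Nat.cast_ne_zero.mpr (Nat.factorial_ne_zero _)
  have n2 : ((κ.factorial : ℕ) : ℝ) ≠ 0 := Nat.cast_ne_zero.mpr (Nat.factorial_ne_zero _)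
  have n3 : ((ν:ℝ)+1) ≠ 0 := by positivity
  push_cast
  field_simp

noncomputable def ff (m ν : ℕ) (z : ℝ) (d k : ℕ) : ℝ := coef (m+d) ν k / ((m:ℝ)+d+1) * z^k

noncomputable def gg (m ν : ℕ) (z : ℝ) (d k : ℕ) : ℝ := coef (m+d) ν k / ((m:ℝ)+d+1) * z^(k+d+1)

lemma ff_nonneg (m ν : ℕ) (hz0 : 0 ≤ z) (d k : ℕ) : 0 ≤ ff m ν z d k :=
  mul_nonneg (div_nonneg (coef_nonneg _ _ _) (by positivity)) (pow_nonneg hz0 _)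

lemma gg_nonneg (m ν : ℕ) (hz0 : 0 ≤ z) (d k : ℕ) : 0 ≤ gg m ν z d k :=
  mul_nonneg (div_nonneg (coef_nonneg _ _ _) (by positivity)) (pow_nonneg hz0 _)

lemma gg_le_ff (m ν : ℕ) (hz0 : 0 ≤ z) (hz1 : z < 1) (d k : ℕ) : gg m ν z d k ≤ ff m ν z d k :=
  mul_le_mul_of_nonneg_left (pow_le_pow_of_le_one hz0 hz1.le (by omega))
    (div_nonneg (coef_nonneg _ _ _) (by positivity))

lemma hasSum_ff (m ν : ℕ) (z : ℝ) (k : ℕ) :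
    HasSum (fun d => ff m ν z d k) (Ak m ν k * z^k) :=
  (hasSum_tel m ν k).mul_right _

lemma hPf (hz0 : 0 ≤ z) (hz1 : z < 1) (m ν : ℕ) :
    Summable (fun q : ℕ × ℕ => ff m ν z q.2 q.1) := by
  refine (summable_prod_of_nonneg (fun q => ff_nonneg m ν hz0 q.2 q.1)).mpr ⟨?_, ?_⟩
  · exact fun k => (hasSum_ff m ν z k).summable
  · refine (S_Az hz0 hz1 m ν).congr fun k => ?_
    exact ((hasSum_ff m ν z k).tsum_eq).symm

lemma hQf (hz0 : 0 ≤ z) (hz1 : z < 1) (m ν : ℕ) :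
    Summable (fun p : ℕ × ℕ => ff m ν z p.1 p.2) :=
  (hPf hz0 hz1 m ν).prod_symm

lemma hQg (hz0 : 0 ≤ z) (hz1 : z < 1) (m ν : ℕ) :
    Summable (fun p : ℕ × ℕ => gg m ν z p.1 p.2) :=
  Summable.of_nonneg_of_le (fun p => gg_nonneg m ν hz0 p.1 p.2)
    (fun p => gg_le_ff m ν hz0 hz1 p.1 p.2) (hQf hz0 hz1 m ν)

lemma ff_swap_eval (hz0 : 0 ≤ z) (hz1 : z < 1) (m ν : ℕ) :
    ∑' (d : ℕ) (k : ℕ), ff m ν z d k = ∑' k : ℕ, Ak m ν k * z^k := by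
  have hc := Summable.tsum_comm (f := fun k d => ff m ν z d k) (hPf hz0 hz1 m ν)
  rw [hc]
  exact tsum_congr fun k => (hasSum_ff m ν z k).tsum_eq

noncomputable def ghat (m ν : ℕ) (z : ℝ) (q : ℕ × ℕ) : ℝ :=
  if q.2 + 1 ≤ q.1 then coef (m+q.2) ν (q.1 - q.2 - 1) / ((m:ℝ)+q.2+1) * z^(q.1) else 0

lemma ghat_comp (m ν : ℕ) (z : ℝ) (p : ℕ × ℕ) :
    ghat m ν z (p.2+p.1+1, p.2) = gg m ν z p.2 p.1 := by
  rw [ghat, gg]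
  simp only [show p.2 + 1 ≤ p.2 + p.1 + 1 by omega, if_true]
  rw [show p.2+p.1+1-p.2-1 = p.1 by omega, show p.1+p.2+1 = p.2+p.1+1 by omega]

lemma iota_inj : Function.Injective (fun p : ℕ × ℕ => (p.2+p.1+1, p.2)) := by
  intro a b h
  simp only [Prod.mk.injEq] at h
  exact Prod.ext (by omega) (by omega)

lemma ghat_supp (m ν : ℕ) (z : ℝ) :
    ∀ q ∉ Set.range (fun p : ℕ × ℕ => (p.2+p.1+1, p.2)), ghat m ν z q = 0 := by
  rintro ⟨Kk, d⟩ hq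
  rw [ghat]
  by_cases h : d + 1 ≤ Kk
  · exfalso
    refine hq ⟨(Kk - d - 1, d), ?_⟩
    have he : d + (Kk - d - 1) + 1 = Kk := by omega
    show ((d + (Kk - d - 1) + 1 : ℕ), d) = (Kk, d)
    rw [he]
  · simp [h]

lemma ghat_supp' (m ν : ℕ) (z : ℝ) :
    Function.support (ghat m ν z) ⊆ Set.range (fun p : ℕ × ℕ => (p.2+p.1+1, p.2)) := by
  intro q hq
  by_contra h
  exact hq (ghat_supp m ν z q h)

lemma hGhat (hz0 : 0 ≤ z) (hz1 : z < 1) (m ν : ℕ) : Summable (ghat m ν z) := by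
  refine ((iota_inj.summable_iff (ghat_supp m ν z)).mp ?_)
  rw [show (ghat m ν z ∘ fun p : ℕ × ℕ => (p.2+p.1+1, p.2))
      = fun p : ℕ × ℕ => gg m ν z p.2 p.1 from funext fun p => ghat_comp m ν z p]
  exact (hQg hz0 hz1 m ν).prod_symm

lemma ghat_inner (m ν : ℕ) (z : ℝ) (Kk : ℕ) :
    ∑' d : ℕ, ghat m ν z (Kk, d) = Bc m ν Kk * z^Kk := by
  have hsum : ∑' d : ℕ, ghat m ν z (Kk, d) = ∑ d ∈ Finset.range Kk, ghat m ν z (Kk, d) := by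
    apply tsum_eq_sum
    intro d hd
    simp only [Finset.mem_range, not_lt] at hd
    rw [ghat]
    simp only [if_neg (by omega : ¬ (d + 1 ≤ Kk))]
  rw [hsum]
  cases Kk with
  | zero => simp [Bc]
  | succ κ =>
      have h1 : ∀ d ∈ Finset.range (κ+1),
          ghat m ν z (κ+1, d) = coef (m+d) ν (κ-d) / ((m:ℝ)+d+1) * z^(κ+1) := by
        intro d hd
        simp only [Finset.mem_range] at hd
        rw [ghat]
        simp only [if_pos (by omega : d + 1 ≤ κ + 1)]
        rw [show κ+1-d-1 = κ-d by omega]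
      rw [Finset.sum_congr rfl h1, ← Finset.sum_mul, sum_diag_eq m ν κ]

lemma gg_eval (hz0 : 0 ≤ z) (hz1 : z < 1) (m ν : ℕ) :
    ∑' (d : ℕ) (k : ℕ), gg m ν z d k = ∑' Kk : ℕ, Bc m ν Kk * z^Kk := by
  have h1 : ∑' p : ℕ × ℕ, gg m ν z p.1 p.2 = ∑' (d : ℕ) (k : ℕ), gg m ν z d k :=
    Summable.tsum_prod (hQg hz0 hz1 m ν)
  have h2 : ∑' p : ℕ × ℕ, ghat m ν z ((fun p : ℕ × ℕ => (p.2+p.1+1, p.2)) p)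
      = ∑' q : ℕ × ℕ, ghat m ν z q := iota_inj.tsum_eq (ghat_supp' m ν z)
  have h3 : ∑' p : ℕ × ℕ, ghat m ν z ((fun p : ℕ × ℕ => (p.2+p.1+1, p.2)) p)
      = ∑' p : ℕ × ℕ, gg m ν z p.2 p.1 := tsum_congr fun p => ghat_comp m ν z p
  have h4 : ∑' q : ℕ × ℕ, ghat m ν z q = ∑' (Kk : ℕ) (d : ℕ), ghat m ν z (Kk, d) :=
    Summable.tsum_prod (hGhat hz0 hz1 m ν)
  have h5 : ∑' p : ℕ × ℕ, gg m ν z p.2 p.1 = ∑' p : ℕ × ℕ, gg m ν z p.1 p.2 := by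
    have h := (Equiv.prodComm ℕ ℕ).tsum_eq (fun p : ℕ × ℕ => gg m ν z p.2 p.1)
    simpa using h.symm
  rw [← h1, ← h5, ← h3, h2, h4]
  exact tsum_congr fun Kk => ghat_inner m ν z Kk

lemma hBsum (hz0 : 0 ≤ z) (hz1 : z < 1) (m ν : ℕ) :
    Summable (fun Kk : ℕ => Bc m ν Kk * z^Kk) := by
  refine ((hGhat hz0 hz1 m ν).prod).congr fun Kk => ?_
  exact ghat_inner m ν z Kk

end PartB2

section PartB3

variable {z : ℝ}

/-- the d-th term of the transported sum -/
noncomputable def tt (m ν : ℕ) (z : ℝ) (d : ℕ) : ℝ :=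
  (1 - z^(d+1)) / ((m:ℝ)+d+1) * C (m+d+1) (ν+1) z

lemma Sff (hz0 : 0 ≤ z) (hz1 : z < 1) (m ν d : ℕ) : Summable (fun k => ff m ν z d k) := by
  refine ((S_coefz hz0 hz1 (m+d) ν).div_const ((m:ℝ)+d+1)).congr fun k => ?_
  rw [ff]
  push_cast
  ring

lemma Sgg (hz0 : 0 ≤ z) (hz1 : z < 1) (m ν d : ℕ) : Summable (fun k => gg m ν z d k) :=
  Summable.of_nonneg_of_le (fun k => gg_nonneg m ν hz0 d k)
    (fun k => gg_le_ff m ν hz0 hz1 d k) (Sff hz0 hz1 m ν d)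

lemma tt_split (hz0 : 0 ≤ z) (hz1 : z < 1) (m ν d : ℕ) :
    tt m ν z d = (∑' k, ff m ν z d k) - (∑' k, gg m ν z d k) := by
  have hC : C (m+d+1) (ν+1) z = ∑' k : ℕ, coef (m+d) ν k * z^k := C_succ_eq_tsum (m+d) ν z
  rw [tt, hC, ← tsum_mul_left, ← Summable.tsum_sub (Sff hz0 hz1 m ν d) (Sgg hz0 hz1 m ν d)]
  refine tsum_congr fun k => ?_
  rw [ff, gg, show k+d+1 = k+(d+1) by ring, pow_add]
  have n5 : ((m:ℝ)+d+1) ≠ 0 := by positivity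
  field_simp
  ring

lemma hFsum (hz0 : 0 ≤ z) (hz1 : z < 1) (m ν : ℕ) :
    Summable (fun d => ∑' k, ff m ν z d k) := (hQf hz0 hz1 m ν).prod

lemma hGsum (hz0 : 0 ≤ z) (hz1 : z < 1) (m ν : ℕ) :
    Summable (fun d => ∑' k, gg m ν z d k) := (hQg hz0 hz1 m ν).prod

lemma key_summable (hz0 : 0 ≤ z) (hz1 : z < 1) (m ν : ℕ) : Summable (tt m ν z) :=
  ((hFsum hz0 hz1 m ν).sub (hGsum hz0 hz1 m ν)).congr fun d => (tt_split hz0 hz1 m ν d).symm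

lemma AB_eq_zero (ν κ : ℕ) : Ak 0 ν (κ+1) - Bc 0 ν (κ+1) = 0 := by
  rw [Ak, Bc]
  rw [show 0+(κ+1) = κ+1 by omega, show κ+1+ν+1 = ν+κ+2 by omega, show 0+κ = κ by omega,
    show 0+ν+κ+2 = ν+κ+2 by omega, show ν+(κ+1) = ν+κ+1 by omega, Nat.factorial_succ κ]
  have n1 : (((ν+κ+2).factorial : ℕ) : ℝ) ≠ 0 := Nat.cast_ne_zero.mpr (Nat.factorial_ne_zero _)
  have n2 : ((κ.factorial : ℕ) : ℝ) ≠ 0 := Nat.cast_ne_zero.mpr (Nat.factorial_ne_zero _)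
  push_cast
  field_simp
  ring

lemma AB_eq_succ (μ ν κ : ℕ) :
    Ak (μ+1) ν (κ+1) - Bc (μ+1) ν (κ+1) = coef μ ν (κ+1) / ((ν:ℝ)+1) := by
  rw [Ak, Bc, coef]
  rw [show μ+1+(κ+1)+ν+1 = μ+ν+κ+3 by omega, show μ+1+(κ+1) = (μ+κ+1)+1 by omega,
    show μ+1+κ = μ+κ+1 by omega, show μ+1+ν+κ+2 = μ+ν+κ+3 by omega,
    show μ+(κ+1) = μ+κ+1 by omega, show μ+ν+(κ+1)+2 = μ+ν+κ+3 by omega,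
    show ν+(κ+1) = ν+κ+1 by omega,
    Nat.factorial_succ (μ+κ+1), Nat.factorial_succ κ]
  have n1 : (((μ+ν+κ+3).factorial : ℕ) : ℝ) ≠ 0 := Nat.cast_ne_zero.mpr (Nat.factorial_ne_zero _)
  have n2 : ((κ.factorial : ℕ) : ℝ) ≠ 0 := Nat.cast_ne_zero.mpr (Nat.factorial_ne_zero _)
  have n3 : ((ν:ℝ)+1) ≠ 0 := by positivity
  push_cast
  field_simp
  ring

lemma AB_eq_zero' (μ ν : ℕ) : Ak (μ+1) ν 0 - Bc (μ+1) ν 0 = coef μ ν 0 / ((ν:ℝ)+1) := by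
  rw [Ak, Bc, coef]
  rw [show μ+1+0 = μ+1 by omega, show μ+1+0+ν+1 = μ+ν+2 by omega,
    show μ+0 = μ by omega, show ν+0 = ν by omega, show μ+ν+0+2 = μ+ν+2 by omega,
    Nat.factorial_succ μ]
  have n1 : (((μ+ν+2).factorial : ℕ) : ℝ) ≠ 0 := Nat.cast_ne_zero.mpr (Nat.factorial_ne_zero _)
  have n3 : ((ν:ℝ)+1) ≠ 0 := by positivity
  push_cast
  field_simp
  ring

lemma key_tsum (hz0 : 0 ≤ z) (hz1 : z < 1) (m ν : ℕ) :
    ∑' d, tt m ν z d = C m (ν+1) z / ((ν:ℝ)+1) := by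
  have step1 : ∑' d, tt m ν z d
      = (∑' (d : ℕ) (k : ℕ), ff m ν z d k) - (∑' (d : ℕ) (k : ℕ), gg m ν z d k) := by
    rw [← Summable.tsum_sub (hFsum hz0 hz1 m ν) (hGsum hz0 hz1 m ν)]
    exact tsum_congr (tt_split hz0 hz1 m ν)
  rw [step1, ff_swap_eval hz0 hz1 m ν, gg_eval hz0 hz1 m ν,
    ← Summable.tsum_sub (S_Az hz0 hz1 m ν) (hBsum hz0 hz1 m ν)]
  have step2 : ∑' Kk, (Ak m ν Kk * z^Kk - Bc m ν Kk * z^Kk)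
      = ∑' Kk, (Ak m ν Kk - Bc m ν Kk) * z^Kk :=
    tsum_congr fun Kk => (sub_mul _ _ _).symm
  rw [step2]
  cases m with
  | zero =>
      rw [C_zero_left]
      rw [tsum_eq_single 0 ?h0]
      case h0 =>
        intro Kk hKk
        obtain ⟨κ, rfl⟩ : ∃ κ, Kk = κ+1 := ⟨Kk-1, by omega⟩
        rw [AB_eq_zero ν κ, zero_mul]
      rw [pow_zero, mul_one, Ak, Bc, sub_zero]
      rw [show 0+0 = 0 by omega, show ν+0 = ν by omega, show 0+0+ν+1 = ν+1 by omega,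
        Nat.factorial_succ ν]
      have n1 : ((ν.factorial : ℕ) : ℝ) ≠ 0 := Nat.cast_ne_zero.mpr (Nat.factorial_ne_zero _)
      have n3 : ((ν:ℝ)+1) ≠ 0 := by positivity
      push_cast
      field_simp
  | succ μ =>
      rw [C_succ_eq_tsum μ ν z]
      have step3 : ∑' Kk, (Ak (μ+1) ν Kk - Bc (μ+1) ν Kk) * z^Kk
          = ∑' Kk, (coef μ ν Kk * z^Kk) / ((ν:ℝ)+1) := by
        refine tsum_congr fun Kk => ?_
        cases Kk with
        | zero => rw [AB_eq_zero' μ ν]; ring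
        | succ κ => rw [AB_eq_succ μ ν κ]; ring
      rw [step3, tsum_div_const]

lemma tt_nonneg (hz0 : 0 ≤ z) (hz1 : z < 1) (m ν : ℕ) (d : ℕ) : 0 ≤ tt m ν z d := by
  rw [tt]
  have h1 : 0 ≤ 1 - z^(d+1) := by
    have := pow_le_one₀ hz0 hz1.le (n := d+1)
    linarith
  have h2 : 0 ≤ C (m+d+1) (ν+1) z := C_nonneg _ _ hz0
  have h3 : (0:ℝ) < (m:ℝ)+d+1 := by positivity
  positivity

lemma keyE (hz0 : 0 ≤ z) (hz1 : z < 1) (m ν : ℕ) :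
    ∑' d : ℕ, ENNReal.ofReal (tt m ν z d)
      = ENNReal.ofReal (C m (ν+1) z / ((ν:ℝ)+1)) := by
  rw [← ENNReal.ofReal_tsum_of_nonneg (tt_nonneg hz0 hz1 m ν) (key_summable hz0 hz1 m ν),
    key_tsum hz0 hz1 m ν]

end PartB3

section PartC

variable {z : ℝ}

lemma termFactor_nonneg (hz0 : 0 ≤ z) (hz1 : z < 1) (k : ℕ) (μ : Bool) (a b : ℕ) :
    0 ≤ termFactor z k μ a b := by
  rw [termFactor]
  apply div_nonneg _ (by positivity)
  cases μ
  · norm_num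
    positivity
  · norm_num
    have := pow_le_one₀ hz0 hz1.le (n := b - a)
    linarith

lemma chain_eq {r : ℕ} (f : Fin r → ℕ) {i : ℕ} (h : i ≤ r) :
    chain f i = ∑ j : Fin i, (f (Fin.castLE h j) + 1) := by
  rw [chain]
  have hset : Finset.univ.filter (fun j : Fin r => (j : ℕ) < i)
      = Finset.univ.map ⟨Fin.castLE h, Fin.castLE_injective h⟩ := by
    ext x
    simp only [Finset.mem_filter, Finset.mem_univ, true_and, Finset.mem_map,
      Function.Embedding.coeFn_mk]
    constructor
    · intro hx
      exact ⟨⟨x.val, hx⟩, by ext; rfl⟩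
    · rintro ⟨j, rfl⟩
      exact j.isLt
  rw [hset, Finset.sum_map]
  rfl

lemma chain_snoc_le {r : ℕ} (q : Fin r → ℕ) (dd : ℕ) {i : ℕ} (h : i ≤ r) :
    chain (Fin.snoc q dd : Fin (r+1) → ℕ) i = chain q i := by
  rw [chain_eq _ (h.trans (Nat.le_succ r)), chain_eq q h]
  refine Finset.sum_congr rfl fun j _ => ?_
  have hc : Fin.castLE (h.trans (Nat.le_succ r)) j = Fin.castSucc (Fin.castLE h j) := by
    ext; rfl
  rw [hc, Fin.snoc_castSucc]

lemma chain_snoc_last {r : ℕ} (q : Fin r → ℕ) (dd : ℕ) :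
    chain (Fin.snoc q dd : Fin (r+1) → ℕ) (r+1) = chain q r + (dd+1) := by
  rw [chain_eq _ (le_refl (r+1)), chain_eq q (le_refl r), Fin.sum_univ_castSucc]
  congr 1
  · refine Finset.sum_congr rfl fun j _ => ?_
    have h1 : Fin.castLE (le_refl (r+1)) (Fin.castSucc j) = Fin.castSucc (Fin.castLE (le_refl r) j) := by
      ext; rfl
    rw [h1, Fin.snoc_castSucc]
  · have h2 : Fin.castLE (le_refl (r+1)) (Fin.last r) = Fin.last r := by ext; rfl
    rw [h2, Fin.snoc_last]

lemma le_chain {s : ℕ} (f : Fin s → ℕ) : s ≤ chain f s := by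
  rw [chain_eq f (le_refl s)]
  calc s = ∑ _j : Fin s, 1 := by simp
    _ ≤ ∑ j : Fin s, (f (Fin.castLE (le_refl s) j) + 1) :=
        Finset.sum_le_sum fun j _ => by omega

noncomputable def W (r : ℕ) (a : Fin r → ℕ × Bool) (q : Fin r → ℕ) (z : ℝ) : ℝ :=
  ∏ i : Fin r, termFactor z (a i).1 (a i).2 (chain q i.val) (chain q (i.val + 1))

lemma W_nonneg (hz0 : 0 ≤ z) (hz1 : z < 1) (r : ℕ) (a : Fin r → ℕ × Bool) (q : Fin r → ℕ) :
    0 ≤ W r a q z :=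
  Finset.prod_nonneg fun i _ => termFactor_nonneg hz0 hz1 _ _ _ _

lemma W_snoc {r : ℕ} (a : Fin r → ℕ × Bool) (x : ℕ × Bool) (q : Fin r → ℕ) (dd : ℕ) :
    W (r+1) (Fin.snoc a x) (Fin.snoc q dd) z
      = W r a q z * termFactor z x.1 x.2 (chain q r) (chain q r + (dd+1)) := by
  rw [W, Fin.prod_univ_castSucc]
  congr 1
  · rw [W]
    refine Finset.prod_congr rfl fun i _ => ?_
    rw [Fin.snoc_castSucc]
    simp only [Fin.coe_castSucc]
    rw [chain_snoc_le q dd (by omega : i.val ≤ r), chain_snoc_le q dd (by omega : i.val + 1 ≤ r)]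
  · rw [Fin.snoc_last]
    simp only [Fin.val_last]
    rw [chain_snoc_le q dd (le_refl r), chain_snoc_last q dd]

noncomputable def gSum (r s : ℕ) (a : Fin r → ℕ × Bool) (b : Fin s → ℕ × Bool) (z : ℝ) : ℝ≥0∞ :=
  ∑' p : (Fin r → ℕ) × (Fin s → ℕ),
    ENNReal.ofReal (W r a p.1 z * W s b p.2 z * C (chain p.1 r) (chain p.2 s) z)

lemma connSum_eq_gSum (A B : AugIndex) (z : ℝ) :
    connSum A B z = gSum A.length B.length (fun i => A.get i) (fun j => B.get j) z := rfl

lemma gSum_congr {r r' s s' : ℕ} (hr : r = r') (hs : s = s')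
    {a : Fin r → ℕ × Bool} {b : Fin s → ℕ × Bool}
    {a' : Fin r' → ℕ × Bool} {b' : Fin s' → ℕ × Bool}
    (ha : ∀ i : Fin r', a (Fin.cast hr.symm i) = a' i)
    (hb : ∀ j : Fin s', b (Fin.cast hs.symm j) = b' j) :
    gSum r s a b z = gSum r' s' a' b' z := by
  subst hr
  subst hs
  have ha' : a = a' := funext fun i => ha i
  have hb' : b = b' := funext fun j => hb j
  rw [ha', hb']

lemma incLast_length (L : AugIndex) : (incLast L).length = L.length := by
  induction L with
  | nil => rfl
  | cons p t ih =>
      cases t with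
      | nil => rfl
      | cons q ts =>
          show (p :: incLast (q :: ts)).length = (p :: q :: ts).length
          simp only [List.length_cons] at ih ⊢
          omega

lemma incLast_getElem (L : AugIndex) (j : ℕ) (h : j < L.length)
    (h' : j < (incLast L).length) :
    (incLast L)[j] = if j + 1 = L.length then ((L[j]'h).1 + 1, (L[j]'h).2) else L[j]'h := by
  induction L generalizing j with
  | nil => exact absurd h (by simp)
  | cons p t ih =>
      cases t with
      | nil =>
          have hj : j = 0 := by simp at h; omega
          subst hj
          simp [incLast]
      | cons q ts =>
          cases j with
          | zero =>
              show (p :: incLast (q :: ts))[0] = _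
              have hcond : ¬ (0 + 1 = (p :: q :: ts).length) := by
                simp only [List.length_cons]; omega
              rw [if_neg hcond]
              rfl
          | succ j =>
              have hh : j < (q :: ts).length := by
                simp only [List.length_cons] at h ⊢; omega
              have hh' : j < (incLast (q :: ts)).length := by
                rw [incLast_length]; exact hh
              rw [show (incLast (p :: q :: ts))[j+1] = (incLast (q :: ts))[j]'hh' from rfl]
              rw [List.getElem_cons_succ]
              rw [ih j hh hh']
              have hiff : (j + 1 = (q :: ts).length) ↔ (j + 1 + 1 = (p :: q :: ts).length) := by
                simp only [List.length_cons]; omega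
              rw [if_congr hiff rfl rfl]

/-- split off the last gap -/
def sE (r s : ℕ) : (((Fin r → ℕ) × (Fin s → ℕ)) × ℕ) ≃ ((Fin (r+1) → ℕ) × (Fin s → ℕ)) where
  toFun x := (Fin.snoc x.1.1 x.2, x.1.2)
  invFun y := ((Fin.init y.1, y.2), y.1 (Fin.last r))
  left_inv x := by
    simp only [Fin.init_snoc, Fin.snoc_last]
  right_inv y := by
    simp only [Fin.snoc_init_self]

lemma W_update {σ : ℕ} (b : Fin (σ+1) → ℕ × Bool) (w : Fin (σ+1) → ℕ) :
    W (σ+1) (Function.update b (Fin.last σ) ((b (Fin.last σ)).1 + 1, (b (Fin.last σ)).2)) w z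
      = W (σ+1) b w z / ((chain w (σ+1) : ℕ) : ℝ) := by
  rw [W, W, Fin.prod_univ_castSucc, Fin.prod_univ_castSucc]
  have h1 : ∀ i : Fin σ,
      Function.update b (Fin.last σ) ((b (Fin.last σ)).1 + 1, (b (Fin.last σ)).2) i.castSucc
        = b i.castSucc :=
    fun i => Function.update_of_ne (Fin.castSucc_lt_last i).ne _ b
  rw [Finset.prod_congr rfl (fun i _ => by rw [h1 i]), Function.update_self]
  simp only [Fin.val_last]
  have h2 : termFactor z ((b (Fin.last σ)).1 + 1) ((b (Fin.last σ)).2) (chain w σ) (chain w (σ+1))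
      = termFactor z ((b (Fin.last σ)).1) ((b (Fin.last σ)).2) (chain w σ) (chain w (σ+1))
        / ((chain w (σ+1) : ℕ) : ℝ) := by
    rw [termFactor, termFactor, pow_succ, ← div_div]
  rw [h2, mul_div_assoc]

lemma tsum_split {α : Type*} {β : Type*} (f : α × β → ℝ≥0∞) :
    ∑' c : α × β, f c = ∑' (a : α) (b : β), f (a, b) := by
  rw [← ENNReal.tsum_prod (f := fun a b => f (a, b))]

lemma gSum_step (hz0 : 0 ≤ z) (hz1 : z < 1) (r σ : ℕ)
    (a : Fin r → ℕ × Bool) (b : Fin (σ+1) → ℕ × Bool) :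
    gSum (r+1) (σ+1) (Fin.snoc a (1, true)) b z
      = gSum r (σ+1) a
          (Function.update b (Fin.last σ) ((b (Fin.last σ)).1 + 1, (b (Fin.last σ)).2)) z := by
  rw [gSum, ← (sE r (σ+1)).tsum_eq, gSum]
  rw [tsum_split]
  refine tsum_congr fun y => ?_
  obtain ⟨ν, hν⟩ : ∃ ν : ℕ, chain y.2 (σ+1) = ν + 1 :=
    ⟨chain y.2 (σ+1) - 1, by have := le_chain y.2; omega⟩
  set m := chain y.1 r with hm
  have hstep1 : ∀ d : ℕ,
      (W (r+1) (Fin.snoc a (1, true)) (Fin.snoc y.1 d) z * W (σ+1) b y.2 z *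
        C (chain (Fin.snoc y.1 d : Fin (r+1) → ℕ) (r+1)) (chain y.2 (σ+1)) z)
      = (W r a y.1 z * W (σ+1) b y.2 z) * tt m ν z d := by
    intro d
    rw [W_snoc, chain_snoc_last, tt, hν]
    have htf : termFactor z 1 true m (m + (d+1)) = (1 - z^(d+1)) / ((m:ℝ)+d+1) := by
      rw [termFactor, show m + (d+1) - m = d+1 by omega, pow_one]
      simp only [if_true]
      push_cast
      ring
    rw [htf, show m + (d+1) = m + d + 1 by omega]
    ring
  calc ∑' d : ℕ, ENNReal.ofReal
        (W (r+1) (Fin.snoc a (1, true)) ((sE r (σ+1)) ((y, d))).1 z *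
          W (σ+1) b ((sE r (σ+1)) ((y, d))).2 z *
          C (chain ((sE r (σ+1)) ((y, d))).1 (r+1)) (chain ((sE r (σ+1)) ((y, d))).2 (σ+1)) z)
      = ∑' d : ℕ, ENNReal.ofReal ((W r a y.1 z * W (σ+1) b y.2 z) * tt m ν z d) := by
        exact tsum_congr fun d => by rw [show ((sE r (σ+1)) ((y, d))).1 = Fin.snoc y.1 d from rfl,
          show ((sE r (σ+1)) ((y, d))).2 = y.2 from rfl, hstep1 d]
    _ = ENNReal.ofReal (W r a y.1 z * W (σ+1) b y.2 z) *
          ∑' d : ℕ, ENNReal.ofReal (tt m ν z d) := by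
        rw [← ENNReal.tsum_mul_left]
        exact tsum_congr fun d =>
          ENNReal.ofReal_mul (mul_nonneg (W_nonneg hz0 hz1 r a y.1) (W_nonneg hz0 hz1 _ b y.2))
    _ = ENNReal.ofReal (W r a y.1 z * W (σ+1) b y.2 z) *
          ENNReal.ofReal (C m (ν+1) z / ((ν:ℝ)+1)) := by rw [keyE hz0 hz1 m ν]
    _ = ENNReal.ofReal (W r a y.1 z *
          W (σ+1) (Function.update b (Fin.last σ) ((b (Fin.last σ)).1 + 1, (b (Fin.last σ)).2)) y.2 z *
          C (chain y.1 r) (chain y.2 (σ+1)) z) := by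
        rw [← ENNReal.ofReal_mul (mul_nonneg (W_nonneg hz0 hz1 r a y.1) (W_nonneg hz0 hz1 _ b y.2))]
        congr 1
        rw [W_update, hν, ← hm]
        push_cast
        ring
  done


/-- Transport relation: L̃i(w(k̃)y₁; w(l̃); z) = L̃i(w(k̃); w(l̃)x; z) for non-empty l̃,
i.e. appending the augmented entry (1,1) to the first index equals increasing the
last exponent of the second index by 1. -/
theorem transport_y1 (z : ℝ) (hz0 : 0 ≤ z) (hz1 : z < 1) (K L : AugIndex)
    (hK : K.Valid) (hL : L.Valid) (hLne : L ≠ []) :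
    connSum (K ++ [(1, true)]) L z = connSum K (incLast L) z := by
  obtain ⟨σ, hσ⟩ : ∃ σ, L.length = σ + 1 := by
    cases L with
    | nil => exact absurd rfl hLne
    | cons a t => exact ⟨t.length, rfl⟩
  have hr : (K ++ [((1:ℕ), true)]).length = K.length + 1 := by simp
  have e1 : connSum (K ++ [(1, true)]) L z
      = gSum (K.length + 1) (σ+1)
          (Fin.snoc (fun i : Fin K.length => K.get i) (1, true))
          (fun j : Fin (σ+1) => L.get (Fin.cast hσ.symm j)) z := by
    rw [connSum_eq_gSum]
    refine gSum_congr hr hσ ?_ ?_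
    · intro i
      refine Fin.lastCases ?_ ?_ i
      · rw [Fin.snoc_last, List.get_eq_getElem]
        exact List.getElem_concat_length rfl _
      · intro j
        rw [Fin.snoc_castSucc]
        simp only [List.get_eq_getElem]
        exact List.getElem_append_left j.isLt
    · intro j
      rfl
  have e2 : connSum K (incLast L) z
      = gSum K.length (σ+1) (fun i : Fin K.length => K.get i)
          (Function.update (fun j : Fin (σ+1) => L.get (Fin.cast hσ.symm j)) (Fin.last σ)
            ((L.get (Fin.cast hσ.symm (Fin.last σ))).1 + 1,
             (L.get (Fin.cast hσ.symm (Fin.last σ))).2)) z := by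
    rw [connSum_eq_gSum]
    refine gSum_congr rfl ((incLast_length L).trans hσ) ?_ ?_
    · intro i; rfl
    · intro j
      refine Fin.lastCases ?_ ?_ j
      · rw [Function.update_self]
        have hσlt : σ < L.length := by omega
        have hσlt' : σ < (incLast L).length := by rw [incLast_length]; omega
        have h5 : (incLast L)[σ]'hσlt' = ((L[σ]'hσlt).1 + 1, (L[σ]'hσlt).2) := by
          rw [incLast_getElem L σ hσlt hσlt', if_pos (by omega)]
        simp only [List.get_eq_getElem]
        exact h5
      · intro i
        rw [Function.update_of_ne (Fin.castSucc_lt_last i).ne]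
        have hlt : (i.val : ℕ) < L.length := by have := i.isLt; omega
        have hlt' : i.val < (incLast L).length := by rw [incLast_length]; exact hlt
        have h5 : (incLast L)[i.val]'hlt' = L[i.val]'hlt := by
          rw [incLast_getElem L i.val hlt hlt', if_neg (by have := i.isLt; omega)]
        simp only [List.get_eq_getElem]
        exact h5
  rw [e1, e2]
  exact gSum_step hz0 hz1 K.length σ _ _

end PartC
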